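/- Suppose A₃ ≠ 0. Define ξ₀(w) = w and ξⱼ an antiderivative of P₂·ξⱼ₋₁ for j = 1,…,d₁. Then H₂(u,v,w) = A₃^{d₁+1}·u - Σ_{j=0}^{d₁} (-1)ʲ A₃^{d₁-j} P₁⁽ʲ⁾(v)·ξⱼ(w) is a first integral of the vector field G(u,v,w) = (P₁(v), P₂(w), A₃), where P₁⁽ʲ⁾ denotes the j-th derivative of P₁. -/

import Mathlib

/-- with A₃ ≠ 0, ξ₀(w) = w and ξⱼ' = P₂·ξⱼ₋₁ for 1 ≤ j ≤ d₁,
H₂(u,v,w) = A₃^(d₁+1)·u - ∑_{j=0}^{d₁} (-1)ʲ A₃^(d₁-j) P₁⁽ʲ⁾(v)·ξⱼ(w)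
is a first integral of G(u,v,w) = (P₁(v), P₂(w), A₃). -/
theorem stmt11 (P₁ P₂ : Polynomial ℝ) (d₁ : ℕ) (hd₁ : P₁.natDegree = d₁) (hd₁' : 1 ≤ d₁)
    (A₃ : ℝ) (hA₃ : A₃ ≠ 0)
    (ξ : ℕ → ℝ → ℝ) (hξ0 : ∀ w : ℝ, ξ 0 w = w)
    (hξ : ∀ j : ℕ, 1 ≤ j → j ≤ d₁ → ∀ w : ℝ, HasDerivAt (ξ j) (P₂.eval w * ξ (j - 1) w) w)
    (H₂ : ℝ × ℝ × ℝ → ℝ)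
    (hH₂ : ∀ u v w : ℝ, H₂ (u, v, w) = A₃ ^ (d₁ + 1) * u -
      ∑ j ∈ Finset.range (d₁ + 1),
        (-1 : ℝ) ^ j * A₃ ^ (d₁ - j) * ((Polynomial.derivative^[j] P₁).eval v) * ξ j w) :
    ∀ u v w : ℝ, fderiv ℝ H₂ (u, v, w) (P₁.eval v, P₂.eval w, A₃) = 0 := by
  intro u v w
  have hH : H₂ = fun p : ℝ × ℝ × ℝ => A₃ ^ (d₁ + 1) * p.1 -
      ∑ j ∈ Finset.range (d₁ + 1),
        (-1 : ℝ) ^ j * A₃ ^ (d₁ - j) * ((Polynomial.derivative^[j] P₁).eval p.2.1) * ξ j p.2.2 := by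
    funext p
    obtain ⟨a, b, c⟩ := p
    exact hH₂ a b c
  rw [hH]
  set Q : ℕ → Polynomial ℝ := fun j => Polynomial.derivative^[j] P₁ with hQ
  set D : ℕ → ℝ → ℝ := fun j y => if j = 0 then 1 else P₂.eval y * ξ (j - 1) y with hDdef
  have hD : ∀ j, j ≤ d₁ → ∀ y : ℝ, HasDerivAt (ξ j) (D j y) y := by
    intro j hj y
    cases j with
    | zero =>
      have h0 : ξ 0 = fun x : ℝ => x := funext hξ0
      simp only [hDdef, if_pos rfl, h0]
      exact hasDerivAt_id y
    | succ n =>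
      simpa [hDdef] using hξ (n + 1) (Nat.succ_le_succ (Nat.zero_le n)) hj y
  set x : ℝ × ℝ × ℝ := (u, v, w) with hx
  set Lu : ℝ × ℝ × ℝ →L[ℝ] ℝ := ContinuousLinearMap.fst ℝ ℝ (ℝ × ℝ) with hLu
  set Lv : ℝ × ℝ × ℝ →L[ℝ] ℝ :=
    (ContinuousLinearMap.fst ℝ ℝ ℝ).comp (ContinuousLinearMap.snd ℝ ℝ (ℝ × ℝ)) with hLv
  set Lw : ℝ × ℝ × ℝ →L[ℝ] ℝ :=
    (ContinuousLinearMap.snd ℝ ℝ ℝ).comp (ContinuousLinearMap.snd ℝ ℝ (ℝ × ℝ)) with hLw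
  have hx2 : HasFDerivAt (fun p : ℝ × ℝ × ℝ => p.2.1) Lv x :=
    hasFDerivAt_fst.comp x hasFDerivAt_snd
  have hx3 : HasFDerivAt (fun p : ℝ × ℝ × ℝ => p.2.2) Lw x :=
    hasFDerivAt_snd.comp x hasFDerivAt_snd
  set L : ℕ → (ℝ × ℝ × ℝ →L[ℝ] ℝ) := fun j =>
      ((-1 : ℝ) ^ j * A₃ ^ (d₁ - j) * (Q j).eval v) • (D j w • Lw) +
      ξ j w • (((-1 : ℝ) ^ j * A₃ ^ (d₁ - j)) • (((Polynomial.derivative (Q j)).eval v) • Lv))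
    with hL
  have hterm : ∀ j ∈ Finset.range (d₁ + 1),
      HasFDerivAt (fun p : ℝ × ℝ × ℝ =>
        (-1 : ℝ) ^ j * A₃ ^ (d₁ - j) * ((Q j).eval p.2.1) * ξ j p.2.2) (L j) x := by
    intro j hj
    have hj' : j ≤ d₁ := Nat.lt_succ_iff.mp (Finset.mem_range.mp hj)
    have ha : HasFDerivAt (fun p : ℝ × ℝ × ℝ => (Q j).eval p.2.1)
        (((Polynomial.derivative (Q j)).eval v) • Lv) x :=
      by
        have h1 : HasDerivAt (fun y => (Q j).eval y) ((Polynomial.derivative (Q j)).eval v)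
            ((fun p : ℝ × ℝ × ℝ => p.2.1) x) := (Q j).hasDerivAt v
        exact h1.comp_hasFDerivAt x hx2
    have hb : HasFDerivAt (fun p : ℝ × ℝ × ℝ => ξ j p.2.2) (D j w • Lw) x :=
      (hD j hj' w).comp_hasFDerivAt x hx3
    exact (ha.const_mul _).mul hb
  have htot : HasFDerivAt (fun p : ℝ × ℝ × ℝ => A₃ ^ (d₁ + 1) * p.1 -
      ∑ j ∈ Finset.range (d₁ + 1),
        (-1 : ℝ) ^ j * A₃ ^ (d₁ - j) * ((Q j).eval p.2.1) * ξ j p.2.2)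
      ((A₃ ^ (d₁ + 1)) • Lu - ∑ j ∈ Finset.range (d₁ + 1), L j) x := by
    exact (hasFDerivAt_fst.const_mul _).sub (HasFDerivAt.fun_sum hterm)
  rw [htot.fderiv]
  simp only [ContinuousLinearMap.sub_apply, ContinuousLinearMap.smul_apply,
    ContinuousLinearMap.coe_sum', Finset.sum_apply, ContinuousLinearMap.add_apply,
    ContinuousLinearMap.coe_comp', Function.comp_apply, ContinuousLinearMap.coe_fst',
    ContinuousLinearMap.coe_snd', smul_eq_mul, hL, hLu, hLv, hLw]
  rw [sub_eq_zero]
  symm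
  have hQsucc : ∀ i, Polynomial.derivative (Q i) = Q (i + 1) := by
    intro i; simp [hQ, Function.iterate_succ_apply']
  have hQtop : Polynomial.derivative (Q d₁) = 0 := by
    rw [hQsucc, hQ]
    exact Polynomial.iterate_derivative_eq_zero (by omega)
  have key : ∀ i ∈ Finset.range d₁,
      ((-1 : ℝ) ^ (i + 1) * A₃ ^ (d₁ - (i + 1)) * Polynomial.eval v (Q (i + 1)) *
        (D (i + 1) w * A₃)) =
      -(ξ i w * ((-1 : ℝ) ^ i * A₃ ^ (d₁ - i) *
        (Polynomial.eval v (Polynomial.derivative (Q i)) * Polynomial.eval w P₂))) := by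
    intro i hi
    have hi' : i < d₁ := Finset.mem_range.mp hi
    have hpow : A₃ ^ (d₁ - i) = A₃ ^ (d₁ - (i + 1)) * A₃ := by
      rw [← pow_succ]; congr 1; omega
    rw [hQsucc, hpow]
    simp only [hDdef, if_neg (Nat.succ_ne_zero i), Nat.add_sub_cancel, pow_succ]
    ring
  rw [Finset.sum_add_distrib, Finset.sum_range_succ' _ d₁, Finset.sum_range_succ _ d₁,
    Finset.sum_congr rfl key, hQtop]
  simp only [hDdef, hQ, if_pos rfl, Function.iterate_zero, id_eq, pow_zero, Nat.sub_zero,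
    Polynomial.eval_zero, Finset.sum_neg_distrib, one_mul, mul_zero, zero_mul, mul_one, add_zero]
  ring
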